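/- There do not exist a C² function φ : ℝ² → ℝ that is ℤ²-periodic (φ(x + m, y + n) = φ(x, y) for all integers m, n) and a function t : ℝ² → ℂ such that Δφ = 4·(e^φ + |t|²·e^{−φ}) holds on ℝ², where Δφ = ∂²φ/∂x² + ∂²φ/∂y². In particular the cosh-Gordon equation (1/2)∂∂̄φ = e^φ + |t|²·e^{−φ} has no doubly periodic solutions. -/

import Mathlib

/-- Laplacian Δf = ∂²f/∂x² + ∂²f/∂y² of a function on ℝ², via the real Fréchet derivative. -/
noncomputable def lap2 (f : ℝ × ℝ → ℝ) (p : ℝ × ℝ) : ℝ :=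
  fderiv ℝ (fun q => fderiv ℝ f q (1, 0)) p (1, 0)
    + fderiv ℝ (fun q => fderiv ℝ f q (0, 1)) p (0, 1)

/-- At a global maximum of a C² function on ℝ, the second derivative is nonpositive. -/
lemma second_deriv_nonpos_at_max {g : ℝ → ℝ} (hg : ContDiff ℝ 2 g)
    (hmax : ∀ s, g s ≤ g 0) : deriv (deriv g) 0 ≤ 0 := by
  by_contra h
  push_neg at h
  have hg1 : ContDiff ℝ 1 (deriv g) := by
    have h2 : ContDiff ℝ ((1 : ℕ∞) + 1) g := by exact_mod_cast hg
    exact (contDiff_succ_iff_deriv.mp h2).2.2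
  have hd0 : deriv g 0 = 0 := by
    have hloc : IsLocalMax g 0 := Filter.Eventually.of_forall hmax
    exact hloc.deriv_eq_zero
  have hdd : HasDerivAt (deriv g) (deriv (deriv g) 0) 0 :=
    ((hg1.differentiable one_ne_zero) 0).hasDerivAt
  have hslope := hasDerivAt_iff_tendsto_slope.mp hdd
  have hev : ∀ᶠ s in nhdsWithin (0:ℝ) (Set.Ioi 0), 0 < slope (deriv g) 0 s := by
    have h1 : ∀ᶠ s in nhdsWithin (0:ℝ) {0}ᶜ, 0 < slope (deriv g) 0 s :=
      hslope.eventually (eventually_gt_nhds h)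
    exact h1.filter_mono (nhdsWithin_mono 0 (fun x hx => ne_of_gt hx))
  obtain ⟨δ, hδ, hsub⟩ := mem_nhdsGT_iff_exists_Ioo_subset.mp hev
  have hδ0 : (0:ℝ) < δ := hδ
  have hpos : ∀ s ∈ Set.Ioo (0:ℝ) δ, 0 < deriv g s := by
    intro s hs
    have hsl : 0 < slope (deriv g) 0 s := hsub hs
    rw [slope_def_field, hd0, sub_zero, sub_zero] at hsl
    rcases div_pos_iff.mp hsl with ⟨ha, _⟩ | ⟨_, hb⟩
    · exact ha
    · exact absurd hs.1 (not_lt.mpr hb.le)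
  have hmono : StrictMonoOn g (Set.Icc 0 δ) :=
    strictMonoOn_of_deriv_pos (convex_Icc 0 δ) hg.continuous.continuousOn
      (by intro s hs; rw [interior_Icc] at hs; exact hpos s hs)
  have hlt : g 0 < g (δ / 2) :=
    hmono ⟨le_rfl, hδ0.le⟩ ⟨by linarith, by linarith⟩ (by linarith)
  exact absurd (hmax (δ / 2)) (not_le.mpr hlt)

/-- Chain rule: the second directional derivative along `v` at a point equals the
second derivative of the restriction to the line through `p₀` in direction `v`. -/
lemma second_dir_deriv_eq {φ : ℝ × ℝ → ℝ} (hφ : ContDiff ℝ 2 φ) (p₀ v : ℝ × ℝ) :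
    deriv (deriv (fun s : ℝ => φ (p₀ + s • v))) 0
      = fderiv ℝ (fun q => fderiv ℝ φ q v) p₀ v := by
  set L : ℝ → ℝ × ℝ := fun s => p₀ + s • v with hL
  have hLd : ∀ s : ℝ, HasDerivAt L v s := by
    intro s
    simpa [hL] using ((hasDerivAt_id s).smul_const v).const_add p₀
  have hφd : Differentiable ℝ φ := hφ.differentiable (by norm_num)
  have hF : ContDiff ℝ 1 (fderiv ℝ φ) := by
    have h2 : ContDiff ℝ ((1 : ℕ∞) + 1) φ := by exact_mod_cast hφ
    exact (contDiff_succ_iff_fderiv.mp h2).2.2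
  have hFv : Differentiable ℝ (fun q => fderiv ℝ φ q v) := by
    exact fun q => ((ContinuousLinearMap.apply ℝ ℝ v).differentiable.comp
      (hF.differentiable one_ne_zero)) q
  have hg' : deriv (fun s : ℝ => φ (p₀ + s • v)) = fun s => fderiv ℝ φ (L s) v := by
    funext s
    exact (((hφd (L s)).hasFDerivAt).comp_hasDerivAt s (hLd s)).deriv
  rw [hg']
  have hL0 : L 0 = p₀ := by simp [hL]
  have : HasDerivAt (fun s => fderiv ℝ φ (L s) v)
      (fderiv ℝ (fun q => fderiv ℝ φ q v) (L 0) v) 0 :=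
    ((hFv (L 0)).hasFDerivAt).comp_hasDerivAt 0 (hLd 0)
  rw [hL0] at this
  exact this.deriv

/-- The cosh-Gordon equation Δφ = 4(e^φ + |t|²e^{−φ}) has no ℤ²-periodic C² solutions:
cosh-Gordon metrics do not exist on the torus. -/
theorem no_periodic_coshGordon_solution :
    ¬ ∃ (φ : ℝ × ℝ → ℝ) (t : ℝ × ℝ → ℂ),
      ContDiff ℝ 2 φ ∧
      (∀ (x y : ℝ) (m n : ℤ), φ (x + m, y + n) = φ (x, y)) ∧
      (∀ p, lap2 φ p = 4 * (Real.exp (φ p) + ‖t p‖ ^ 2 * Real.exp (-φ p))) := by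
  rintro ⟨φ, t, hφ, hper, heq⟩
  -- φ attains a global maximum, by periodicity and compactness of the fundamental domain
  obtain ⟨p₀, _, hp₀⟩ := (isCompact_Icc (a := ((0:ℝ),(0:ℝ))) (b := (1,1))).exists_isMaxOn
    ⟨(0, 0), by constructor <;> constructor <;> norm_num⟩
    hφ.continuous.continuousOn
  have hglob : ∀ p, φ p ≤ φ p₀ := by
    rintro ⟨x, y⟩
    have h1 : φ (x, y) = φ (Int.fract x, Int.fract y) := by
      have := hper (Int.fract x) (Int.fract y) ⌊x⌋ ⌊y⌋
      rwa [Int.fract_add_floor, Int.fract_add_floor] at this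
    rw [h1]
    exact hp₀ ⟨⟨(Int.fract_nonneg x), (Int.fract_nonneg y)⟩,
      ⟨(Int.fract_lt_one x).le, (Int.fract_lt_one y).le⟩⟩
  -- second directional derivatives at the max are nonpositive
  have key : ∀ v : ℝ × ℝ, fderiv ℝ (fun q => fderiv ℝ φ q v) p₀ v ≤ 0 := by
    intro v
    rw [← second_dir_deriv_eq hφ p₀ v]
    apply second_deriv_nonpos_at_max
    · exact hφ.comp (by fun_prop)
    · intro s
      simpa using hglob (p₀ + s • v)
  have hlap : lap2 φ p₀ ≤ 0 := add_nonpos (key (1, 0)) (key (0, 1))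
  have hrhs : 0 < 4 * (Real.exp (φ p₀) + ‖t p₀‖ ^ 2 * Real.exp (-φ p₀)) := by
    have h1 : (0:ℝ) < Real.exp (φ p₀) := Real.exp_pos _
    have h2 : (0:ℝ) ≤ ‖t p₀‖ ^ 2 * Real.exp (-φ p₀) :=
      mul_nonneg (sq_nonneg _) (Real.exp_pos _).le
    nlinarith
  rw [heq p₀] at hlap
  linarith
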